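/- Fix real parameters 0 < α < γ and define μ, β, δ, k, x, z as in the unduloid setup. Then the signed curvature of the generating curve vanishes at v, i.e. x'(v) z''(v) − x''(v) z'(v) = 0, if and only if sin(μv) = −(γ−α)/(γ+α); moreover, the set of such v lying in one period interval [0, π(α+γ)) has exactly two elements. -/

import Mathlib

open Real

/-- The incomplete elliptic integral of the first kind,
`F(φ, k) = ∫₀^φ (1 − k² sin²θ)^{−1/2} dθ`. -/
noncomputable def ellipticF (k φ : ℝ) : ℝ :=
  ∫ θ in (0:ℝ)..φ, (Real.sqrt (1 - k ^ 2 * Real.sin θ ^ 2))⁻¹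

/-- The incomplete elliptic integral of the second kind,
`E(φ, k) = ∫₀^φ (1 − k² sin²θ)^{1/2} dθ`. -/
noncomputable def ellipticE (k φ : ℝ) : ℝ :=
  ∫ θ in (0:ℝ)..φ, Real.sqrt (1 - k ^ 2 * Real.sin θ ^ 2)

lemma elliptic_aux_pos (k : ℝ) (hk : k ^ 2 < 1) (θ : ℝ) :
    0 < 1 - k ^ 2 * Real.sin θ ^ 2 := by
  nlinarith [Real.sin_sq_le_one θ, sq_nonneg (k * Real.sin θ), sq_nonneg k]

lemma ellipticE_hasDerivAt (k : ℝ) (φ : ℝ) :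
    HasDerivAt (ellipticE k) (Real.sqrt (1 - k ^ 2 * Real.sin φ ^ 2)) φ := by
  have hc : Continuous fun θ : ℝ => Real.sqrt (1 - k ^ 2 * Real.sin θ ^ 2) :=
    (by continuity : Continuous fun θ : ℝ => 1 - k ^ 2 * Real.sin θ ^ 2).sqrt
  exact (hc.integral_hasStrictDerivAt 0 φ).hasDerivAt

lemma ellipticF_hasDerivAt (k : ℝ) (hk : k ^ 2 < 1) (φ : ℝ) :
    HasDerivAt (ellipticF k) (Real.sqrt (1 - k ^ 2 * Real.sin φ ^ 2))⁻¹ φ := by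
  have hc0 : Continuous fun θ : ℝ => Real.sqrt (1 - k ^ 2 * Real.sin θ ^ 2) :=
    (by continuity : Continuous fun θ : ℝ => 1 - k ^ 2 * Real.sin θ ^ 2).sqrt
  have hc : Continuous fun θ : ℝ => (Real.sqrt (1 - k ^ 2 * Real.sin θ ^ 2))⁻¹ :=
    hc0.inv₀ fun θ => (Real.sqrt_pos.2 (elliptic_aux_pos k hk θ)).ne'
  exact (hc.integral_hasStrictDerivAt 0 φ).hasDerivAt

lemma curv_algebra (α γ μ β X c s : ℝ) (hX : X ≠ 0) :
    (β * μ * c / (2 * X)) *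
      ((μ / 2) * ((0 * X - α * γ * (β * μ * c / (2 * X))) / X ^ 2 + β * μ * c / (2 * X))) -
      ((β * μ * (-s * μ) * (2 * X) - β * μ * c * (2 * (β * μ * c / (2 * X)))) / (2 * X) ^ 2) *
      ((μ / 2) * (α * γ / X + X)) =
    μ ^ 3 * (β ^ 2 * c ^ 2 + β * s * (α * γ) + β * s * X ^ 2) / (4 * X ^ 2) := by
  field_simp
  ring

lemma curv_algebra2 (α γ μ β δ s : ℝ) (hδ : δ = (γ ^ 2 + α ^ 2) / 2) (h0 : β * s + δ ≠ 0) :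
    μ ^ 3 * (β ^ 2 * (1 - s ^ 2) + β * s * (α * γ) + β * s * (β * s + δ)) / (4 * (β * s + δ)) =
    μ ^ 3 * β * (2 * β + s * (α + γ) ^ 2) / (8 * (β * s + δ)) := by
  subst hδ
  rcases eq_or_ne (β * s + (γ ^ 2 + α ^ 2) / 2) 0 with h | h
  · exact absurd h h0
  rw [div_eq_div_iff (by intro hc; apply h; linarith) (by intro hc; apply h; linarith)]
  ring

/-- In the unduloid setup with parameters `0 < α < γ`, the signed curvature
`x'z'' − x''z'` of the generating curve vanishes at `v` iff `sin(μv) = −(γ−α)/(γ+α)`,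
and the set of such `v` in one period interval `[0, π(α+γ))` has exactly two elements. -/
theorem statement_11 (α γ : ℝ) (hα : 0 < α) (hαγ : α < γ)
    (μ β δ k : ℝ) (hμ : μ = 2 / (α + γ)) (hβ : β = (γ ^ 2 - α ^ 2) / 2)
    (hδ : δ = (γ ^ 2 + α ^ 2) / 2) (hk : k = Real.sqrt (γ ^ 2 - α ^ 2) / γ)
    (x z : ℝ → ℝ)
    (hx : ∀ v, x v = Real.sqrt (β * Real.sin (μ * v) + δ))
    (hz : ∀ v, z v = α * ellipticF k (μ * v / 2 - Real.pi / 4) +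
      γ * ellipticE k (μ * v / 2 - Real.pi / 4)) :
    (∀ v : ℝ,
      deriv x v * deriv (deriv z) v - deriv (deriv x) v * deriv z v = 0 ↔
        Real.sin (μ * v) = -((γ - α) / (γ + α))) ∧
    {v : ℝ | v ∈ Set.Ico (0 : ℝ) (Real.pi * (α + γ)) ∧
      deriv x v * deriv (deriv z) v - deriv (deriv x) v * deriv z v = 0}.ncard = 2 := by
  have hγ : 0 < γ := hα.trans hαγ
  have hsum : 0 < α + γ := by linarith
  have hμ0 : 0 < μ := by rw [hμ]; positivity
  have hβ0 : 0 < β := by rw [hβ]; nlinarith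
  have hk2 : k ^ 2 < 1 := by
    rw [hk, div_pow, Real.sq_sqrt (by nlinarith : (0:ℝ) ≤ γ ^ 2 - α ^ 2),
      div_lt_one (by positivity)]
    nlinarith
  have hP : ∀ v : ℝ, 0 < β * Real.sin (μ * v) + δ := by
    intro v
    have h1 := Real.neg_one_le_sin (μ * v)
    have h2 := Real.sin_le_one (μ * v)
    rw [hβ, hδ]; nlinarith
  have hxeq : x = fun v => Real.sqrt (β * Real.sin (μ * v) + δ) := funext hx
  have hxpos : ∀ v, 0 < x v := fun v => by rw [hx]; exact Real.sqrt_pos.2 (hP v)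
  have hx2 : ∀ v, x v ^ 2 = β * Real.sin (μ * v) + δ := fun v => by
    rw [hx]; exact Real.sq_sqrt (hP v).le
  have hlin : ∀ v : ℝ, HasDerivAt (fun v : ℝ => μ * v) μ v := fun v => by
    simpa using (hasDerivAt_id v).const_mul μ
  -- first derivative of x
  have hdx : ∀ v, HasDerivAt x (β * μ * Real.cos (μ * v) / (2 * x v)) v := by
    intro v
    have h1 : HasDerivAt (fun v : ℝ => β * Real.sin (μ * v) + δ)
        (β * (Real.cos (μ * v) * μ)) v :=
      (((Real.hasDerivAt_sin (μ * v)).comp v (hlin v)).const_mul β).add_const δ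
    have h2 := h1.sqrt (hP v).ne'
    rw [hxeq]
    convert h2 using 1
    rw [← hxeq, hx v]
    ring
  have hdx' : deriv x = fun v => β * μ * Real.cos (μ * v) / (2 * x v) :=
    funext fun v => (hdx v).deriv
  -- second derivative of x
  have hddx : ∀ v, HasDerivAt (fun v => β * μ * Real.cos (μ * v) / (2 * x v))
      ((β * μ * (-Real.sin (μ * v) * μ) * (2 * x v) -
        β * μ * Real.cos (μ * v) * (2 * (β * μ * Real.cos (μ * v) / (2 * x v)))) /
        (2 * x v) ^ 2) v := by
    intro v
    have hnum : HasDerivAt (fun v : ℝ => β * μ * Real.cos (μ * v))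
        (β * μ * (-Real.sin (μ * v) * μ)) v :=
      ((Real.hasDerivAt_cos (μ * v)).comp v (hlin v)).const_mul (β * μ)
    have hden : HasDerivAt (fun v => 2 * x v)
        (2 * (β * μ * Real.cos (μ * v) / (2 * x v))) v := (hdx v).const_mul 2
    exact hnum.div hden (mul_pos two_pos (hxpos v)).ne'
  -- key square-root identity
  have hsq : ∀ v : ℝ,
      Real.sqrt (1 - k ^ 2 * Real.sin (μ * v / 2 - π / 4) ^ 2) = x v / γ := by
    intro v
    have hcos : Real.cos (2 * (μ * v / 2 - π / 4)) = Real.sin (μ * v) := by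
      have h : 2 * (μ * v / 2 - π / 4) = μ * v - π / 2 := by ring
      rw [h, Real.cos_sub, Real.cos_pi_div_two, Real.sin_pi_div_two]; ring
    have hsin2 : Real.sin (μ * v / 2 - π / 4) ^ 2 = (1 - Real.sin (μ * v)) / 2 := by
      rw [Real.sin_sq, Real.cos_sq, hcos]; ring
    have hk2' : k ^ 2 = (γ ^ 2 - α ^ 2) / γ ^ 2 := by
      rw [hk, div_pow, Real.sq_sqrt (by nlinarith : (0:ℝ) ≤ γ ^ 2 - α ^ 2)]
    have h1 : 1 - k ^ 2 * Real.sin (μ * v / 2 - π / 4) ^ 2 = (x v / γ) ^ 2 := by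
      rw [hsin2, hk2', div_pow, hx2 v, hβ, hδ]
      field_simp
      ring
    rw [h1, Real.sqrt_sq (div_nonneg (hxpos v).le hγ.le)]
  -- first derivative of z
  have hdz : ∀ v, HasDerivAt z ((μ / 2) * (α * γ / x v + x v)) v := by
    intro v
    have hφ : HasDerivAt (fun v : ℝ => μ * v / 2 - π / 4) (μ / 2) v := by
      simpa using ((hlin v).div_const 2).sub_const (π / 4)
    have hF := ((ellipticF_hasDerivAt k hk2 (μ * v / 2 - π / 4)).comp v hφ)
    have hE := ((ellipticE_hasDerivAt k (μ * v / 2 - π / 4)).comp v hφ)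
    simp only [Function.comp_def] at hF hE
    have hzeq : z = fun v => α * ellipticF k (μ * v / 2 - π / 4) +
        γ * ellipticE k (μ * v / 2 - π / 4) := funext hz
    rw [hzeq]
    have h := (hF.const_mul α).add (hE.const_mul γ)
    refine h.congr_deriv ?_
    rw [hsq v]
    have hxv := (hxpos v).ne'
    field_simp
  have hdz' : deriv z = fun v => (μ / 2) * (α * γ / x v + x v) :=
    funext fun v => (hdz v).deriv
  -- second derivative of z
  have hddz : ∀ v, HasDerivAt (fun v => (μ / 2) * (α * γ / x v + x v))
      ((μ / 2) * ((0 * x v - α * γ * (β * μ * Real.cos (μ * v) / (2 * x v))) / x v ^ 2 +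
        β * μ * Real.cos (μ * v) / (2 * x v))) v := by
    intro v
    have h1 : HasDerivAt (fun v => α * γ / x v)
        ((0 * x v - α * γ * (β * μ * Real.cos (μ * v) / (2 * x v))) / x v ^ 2) v :=
      (hasDerivAt_const v (α * γ)).div (hdx v) (hxpos v).ne'
    exact (h1.add (hdx v)).const_mul (μ / 2)
  -- the curvature formula
  have hN : ∀ v : ℝ,
      deriv x v * deriv (deriv z) v - deriv (deriv x) v * deriv z v =
      μ ^ 3 * β * (2 * β + Real.sin (μ * v) * (α + γ) ^ 2) /
        (8 * (β * Real.sin (μ * v) + δ)) := by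
    intro v
    rw [hdx', hdz']
    rw [(hddx v).deriv, (hddz v).deriv]
    have hXne := (hxpos v).ne'
    rw [curv_algebra α γ μ β (x v) (Real.cos (μ * v)) (Real.sin (μ * v)) hXne,
      Real.cos_sq' (μ * v), hx2 v]
    exact curv_algebra2 α γ μ β δ (Real.sin (μ * v)) hδ (hP v).ne'
  -- the iff
  have hiff : ∀ v : ℝ,
      deriv x v * deriv (deriv z) v - deriv (deriv x) v * deriv z v = 0 ↔
        Real.sin (μ * v) = -((γ - α) / (γ + α)) := by
    intro v
    rw [hN v, div_eq_zero_iff]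
    have h0 : (8 : ℝ) * (β * Real.sin (μ * v) + δ) ≠ 0 :=
      (mul_pos (by norm_num) (hP v)).ne'
    have hμβ : μ ^ 3 * β ≠ 0 := (mul_pos (pow_pos hμ0 3) hβ0).ne' 
    constructor
    · rintro (h | h)
      · rcases mul_eq_zero.1 h with h | h
        · exact absurd h hμβ
        · have h2 : (α + γ) * (Real.sin (μ * v) * (α + γ) + (γ - α)) = 0 := by
            rw [hβ] at h; linear_combination h
          rcases mul_eq_zero.1 h2 with h3 | h3
          · exact absurd h3 hsum.ne'
          · field_simp
            linarith
      · exact absurd h h0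
    · intro h
      left
      rw [h, hβ]
      field_simp
      ring
  refine ⟨hiff, ?_⟩
  -- counting
  set r : ℝ := (γ - α) / (γ + α) with hr
  have hr0 : 0 < r := div_pos (by linarith) (by linarith)
  have hr1 : r < 1 := by rw [hr, div_lt_one (by linarith : (0:ℝ) < γ + α)]; linarith
  set a : ℝ := Real.arcsin r with ha
  have ha0 : 0 < a := Real.arcsin_pos.2 hr0
  have ha2 : a < π / 2 := Real.arcsin_lt_pi_div_two.2 hr1
  have hsa : Real.sin a = r := Real.sin_arcsin (by linarith) hr1.le
  have hμne : μ ≠ 0 := hμ0.ne'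
  have hper : μ * (π * (α + γ)) = 2 * π := by rw [hμ]; field_simp
  have hSeq : {v : ℝ | v ∈ Set.Ico (0 : ℝ) (Real.pi * (α + γ)) ∧
      deriv x v * deriv (deriv z) v - deriv (deriv x) v * deriv z v = 0} =
      {(π + a) / μ, (2 * π - a) / μ} := by
    ext v
    simp only [Set.mem_setOf_eq, Set.mem_Ico, Set.mem_insert_iff, Set.mem_singleton_iff,
      hiff v]
    constructor
    · rintro ⟨⟨h0, h1⟩, hsin⟩
      have ht0 : 0 ≤ μ * v := by positivity
      have ht1 : μ * v < 2 * π := by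
        calc μ * v < μ * (π * (α + γ)) := by
              exact (mul_lt_mul_iff_right₀ hμ0).2 h1
          _ = 2 * π := hper
      have htpi : π < μ * v := by
        by_contra hc
        push_neg at hc
        have := Real.sin_nonneg_of_nonneg_of_le_pi ht0 hc
        rw [hsin] at this
        linarith
      have hu1 : μ * v - π < π := by
        have := Real.pi_pos; linarith
      have hsinu : Real.sin (μ * v - π) = r := by
        have : Real.sin (μ * v - π + π) = -Real.sin (μ * v - π) := Real.sin_add_pi _
        simp only [sub_add_cancel] at this
        rw [hsin] at this
        linarith
      rcases le_or_gt (μ * v - π) (π / 2) with hc | hc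
      · left
        have : Real.arcsin (Real.sin (μ * v - π)) = μ * v - π :=
          Real.arcsin_sin (by linarith) hc
        rw [hsinu] at this
        rw [eq_div_iff hμne]
        rw [← ha] at this
        linarith [this]
      · right
        have hps : Real.sin (π - (μ * v - π)) = r := by rw [Real.sin_pi_sub, hsinu]
        have : Real.arcsin (Real.sin (π - (μ * v - π))) = π - (μ * v - π) :=
          Real.arcsin_sin (by linarith) (by linarith)
        rw [hps, ← ha] at this
        rw [eq_div_iff hμne]
        linarith
    · have hpi := Real.pi_pos
      have hper' : π * (α + γ) * μ = 2 * π := by rw [hμ]; field_simp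
      rintro (rfl | rfl)
      · refine ⟨⟨div_nonneg (by linarith) hμ0.le, ?_⟩, ?_⟩
        · rw [div_lt_iff₀ hμ0, hper']
          linarith
        · have hmv : μ * ((π + a) / μ) = π + a := by field_simp
          rw [hmv, add_comm, Real.sin_add_pi, hsa]
      · refine ⟨⟨div_nonneg (by linarith) hμ0.le, ?_⟩, ?_⟩
        · rw [div_lt_iff₀ hμ0, hper']
          linarith
        · have hmv : μ * ((2 * π - a) / μ) = 2 * π - a := by field_simp
          rw [hmv, Real.sin_two_pi_sub, hsa]
  rw [hSeq]
  refine Set.ncard_pair ?_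
  intro h
  rw [div_eq_div_iff hμne hμne] at h
  have : π + a = 2 * π - a := by
    have := mul_right_cancel₀ hμne h
    linarith [this]
  linarith [Real.pi_pos, ha2, this]
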